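/- Let (E,d) be a metric space with a Borel probability measure μ. Let A₁,…,A_k be Borel sets with (μ(A₁),…,μ(A_k)) ∈ Δ_k and r := (1/2)·min_{i≠j} d(A_i,A_j) > 0. Let 0 < ε ≤ r, set A = ∪_{1≤i≤k} A_i and A₀ = E \ A_ε. Then max_{i=0,…,k} μ(A_{i,ε})/μ(A_i) ≤ (1 − μ(A))/(1 − μ(A_ε)). -/

import Mathlib

open MeasureTheory Filter Topology
open scoped ENNReal NNReal

noncomputable def localLip {E : Type*} [MetricSpace E] (f : E → ℝ) (x : E) : ℝ≥0∞ :=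
  Filter.limsup (fun y => ENNReal.ofReal (|f x - f y| / dist x y)) (𝓝[≠] x)

noncomputable def lambdaK {E : Type*} [MetricSpace E] [MeasurableSpace E]
    (μ : Measure E) (k : ℕ) : ℝ :=
  (⨅ (V : Submodule ℝ (E → ℝ)) (_ : Module.finrank ℝ V = k + 1)
      (_ : ∀ f ∈ V, MemLp f 2 μ ∧ (∫⁻ x, (localLip f x) ^ 2 ∂μ) < ⊤),
    ⨆ (f : E → ℝ) (_ : f ∈ V) (_ : f ≠ 0),
      (∫⁻ x, (localLip f x) ^ 2 ∂μ) / (∫⁻ x, ENNReal.ofReal ((f x) ^ 2) ∂μ)).toReal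

noncomputable def distSet {E : Type*} [MetricSpace E] (A B : Set E) : ℝ :=
  sInf (Set.image2 dist A B)

def memDelta {k : ℕ} (a : Fin k → ℝ) : Prop :=
  (∀ i, 0 ≤ a i ∧ a i ≤ 1) ∧ (∑ j, a j) ≤ 1 ∧ (∀ i, 1 ≤ a i + ∑ j, a j)

noncomputable def minPairDist {E : Type*} [MetricSpace E] {k : ℕ} (A : Fin k → Set E) : ℝ :=
  sInf {d : ℝ | ∃ i j : Fin k, i ≠ j ∧ d = distSet (A i) (A j)}

/-- Lemma `max_of_quotient`: for sets `A₁, …, A_k` with measures in `Δ_k` that are pairwise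
`2r`-separated, `0 < ε ≤ r`, `A = ⋃ Aᵢ` and `A₀ = E \ A_ε`, each ratio
`μ(A_{i,ε})/μ(Aᵢ)`, `i = 0, …, k`, is at most `(1 - μ(A))/(1 - μ(A_ε))`
(stated in cross-multiplied form). -/
theorem stmt6 {E : Type*} [MetricSpace E] [MeasurableSpace E] [BorelSpace E]
    (μ : Measure E) [IsProbabilityMeasure μ]
    (k : ℕ) (hk : 1 ≤ k) (A : Fin k → Set E) (hA : ∀ i, MeasurableSet (A i))
    (hΔ : memDelta (fun i => (μ (A i)).toReal))
    (r : ℝ) (hr : r = 1 / 2 * minPairDist A) (hrpos : 0 < r)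
    (ε : ℝ) (hε : 0 < ε) (hεr : ε ≤ r) :
    ((μ (Metric.thickening ε ((Metric.thickening ε (⋃ i, A i))ᶜ))).toReal *
        (1 - (μ (Metric.thickening ε (⋃ i, A i))).toReal) ≤
      (μ ((Metric.thickening ε (⋃ i, A i))ᶜ)).toReal * (1 - (μ (⋃ i, A i)).toReal)) ∧
    (∀ i, (μ (Metric.thickening ε (A i))).toReal *
        (1 - (μ (Metric.thickening ε (⋃ i, A i))).toReal) ≤
      (μ (A i)).toReal * (1 - (μ (⋃ i, A i)).toReal)) := by
  -- separation
  have hsep : ∀ i j : Fin k, i ≠ j → ∀ x ∈ A i, ∀ y ∈ A j, 2 * r ≤ dist x y := by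
    intro i j hij x hx y hy
    have hSfin : {d : ℝ | ∃ i j : Fin k, i ≠ j ∧ d = distSet (A i) (A j)}.Finite :=
      Set.Finite.subset (Set.finite_range (fun p : Fin k × Fin k => distSet (A p.1) (A p.2)))
        (by rintro d ⟨i, j, hij, rfl⟩; exact ⟨(i, j), rfl⟩)
    have h1 : minPairDist A ≤ distSet (A i) (A j) :=
      csInf_le hSfin.bddBelow ⟨i, j, hij, rfl⟩
    have h2 : distSet (A i) (A j) ≤ dist x y :=
      csInf_le ⟨0, by rintro d ⟨u, _, v, _, rfl⟩; exact dist_nonneg⟩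
        (Set.mem_image2_of_mem hx hy)
    rw [hr]; linarith
  -- disjointness of thickenings
  have hdisjT : Pairwise (Function.onFun Disjoint fun i => Metric.thickening ε (A i)) := by
    intro i j hij
    rw [Function.onFun, Set.disjoint_left]
    intro x hxi hxj
    obtain ⟨y, hy, hxy⟩ := Metric.mem_thickening_iff.1 hxi
    obtain ⟨z, hz, hxz⟩ := Metric.mem_thickening_iff.1 hxj
    have := hsep i j hij y hy z hz
    have : dist y z ≤ dist y x + dist x z := dist_triangle y x z
    rw [dist_comm y x] at this
    linarith [hsep i j hij y hy z hz]
  have hdisjA : Pairwise (Function.onFun Disjoint A) := fun i j hij =>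
    Set.disjoint_of_subset (Metric.self_subset_thickening hε _)
      (Metric.self_subset_thickening hε _) (hdisjT hij)
  set U := ⋃ i, A i with hU
  -- measures as real sums
  have hmU : (μ U).toReal = ∑ j, (μ (A j)).toReal := by
    rw [hU, measure_iUnion hdisjA hA, tsum_fintype, ENNReal.toReal_sum]
    exact fun j _ => measure_ne_top μ _
  have hTU : Metric.thickening ε U = ⋃ i, Metric.thickening ε (A i) :=
    Metric.thickening_iUnion ε A
  have hmTU : (μ (Metric.thickening ε U)).toReal
      = ∑ j, (μ (Metric.thickening ε (A j))).toReal := by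
    rw [hTU, measure_iUnion hdisjT (fun i => Metric.isOpen_thickening.measurableSet),
      tsum_fintype, ENNReal.toReal_sum]
    exact fun j _ => measure_ne_top μ _
  have hcompl : (μ ((Metric.thickening ε U)ᶜ)).toReal
      = 1 - (μ (Metric.thickening ε U)).toReal := by
    rw [measure_compl Metric.isOpen_thickening.measurableSet (measure_ne_top μ _),
      measure_univ, ENNReal.toReal_sub_of_le prob_le_one ENNReal.one_ne_top,
      ENNReal.toReal_one]
  constructor
  · -- claim for A₀
    have hsub : Metric.thickening ε ((Metric.thickening ε U)ᶜ) ⊆ Uᶜ := by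
      intro x hx
      obtain ⟨y, hy, hxy⟩ := Metric.mem_thickening_iff.1 hx
      intro hxU
      exact hy (Metric.mem_thickening_iff.2 ⟨x, hxU, by rwa [dist_comm]⟩)
    have h1 : (μ (Metric.thickening ε ((Metric.thickening ε U)ᶜ))).toReal
        ≤ (μ (Uᶜ)).toReal :=
      ENNReal.toReal_mono (measure_ne_top μ _) (measure_mono hsub)
    have h2 : (μ (Uᶜ)).toReal = 1 - (μ U).toReal := by
      rw [measure_compl (hU ▸ MeasurableSet.iUnion hA : MeasurableSet U) (measure_ne_top μ _),
        measure_univ, ENNReal.toReal_sub_of_le prob_le_one ENNReal.one_ne_top,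
        ENNReal.toReal_one]
    rw [hcompl]
    have hnn : 0 ≤ 1 - (μ (Metric.thickening ε U)).toReal := by
      rw [← hcompl]; exact ENNReal.toReal_nonneg
    nlinarith [h1, h2, hnn,
      ENNReal.toReal_nonneg (a := μ (Metric.thickening ε ((Metric.thickening ε U)ᶜ)))]
  · intro i
    set a : Fin k → ℝ := fun j => (μ (A j)).toReal with ha
    set b : Fin k → ℝ := fun j => (μ (Metric.thickening ε (A j))).toReal with hb
    have hab : ∀ j, a j ≤ b j := fun j =>
      ENNReal.toReal_mono (measure_ne_top μ _)
        (measure_mono (Metric.self_subset_thickening hε _))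
    have hann : ∀ j, 0 ≤ a j := fun j => ENNReal.toReal_nonneg
    have hbnn : ∀ j, 0 ≤ b j := fun j => ENNReal.toReal_nonneg
    have hsum : ∑ j, a j ≤ ∑ j ∈ Finset.univ.erase i, a j + a i := by
      rw [Finset.sum_erase_add _ _ (Finset.mem_univ i)]
    have hsum2 : ∑ j ∈ Finset.univ.erase i, a j + b i ≤ ∑ j, b j := by
      rw [← Finset.sum_erase_add _ b (Finset.mem_univ i)]
      exact add_le_add_left (Finset.sum_le_sum fun j _ => hab j) _
    have hΔi : 1 ≤ a i + ∑ j, a j := hΔ.2.2 i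
    have hkey : ∑ j ∈ Finset.univ.erase i, a j = ∑ j, a j - a i := by
      rw [← Finset.sum_erase_add _ a (Finset.mem_univ i)]; ring
    rw [hmU, hmTU]
    have hT : ∑ j, a j - a i + b i ≤ ∑ j, b j := by rw [← hkey]; exact hsum2
    nlinarith [hab i, hann i, hbnn i, mul_nonneg (hbnn i) (sub_nonneg.2 (hab i))]
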